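/- Let x₁, y₁, x₂, y₂, m, q ∈ ℝ and Δ ≥ 0 with x₁ < x₂, and set D := √((x₂−x₁)² + (y₂−y₁)²). If |y₁ − m·x₁ − q| ≤ Δ·√(1+m²) and |y₂ − m·x₂ − q| ≤ Δ·√(1+m²), then |sin(arctan((y₂−y₁)/(x₂−x₁)) − arctan m)| · D ≤ 2Δ. In particular, if moreover D > 2Δ, the angle β = arctan m of any line of slope m within distance Δ of both points satisfies |sin(θ − β)| ≤ sin α, where θ = arctan((y₂−y₁)/(x₂−x₁)) and α = arcsin(2Δ/D). -/

import Mathlib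

/-- **Angular window (Proposition 3, proof).** If a line of slope `m` and intercept `q` is
within distance `Δ` of both `(x₁, y₁)` and `(x₂, y₂)` with `x₁ < x₂`, then, writing
`D = √((x₂-x₁)² + (y₂-y₁)²)` and `θ = arctan((y₂-y₁)/(x₂-x₁))`, one has
`|sin(θ - arctan m)| · D ≤ 2Δ`; in particular, if `D > 2Δ`, then
`|sin(θ - arctan m)| ≤ sin(arcsin(2Δ/D))`. -/
theorem angular_window (x₁ y₁ x₂ y₂ m q Δ : ℝ) (hΔ : 0 ≤ Δ) (hx : x₁ < x₂)
    (D : ℝ) (hD : D = Real.sqrt ((x₂ - x₁) ^ 2 + (y₂ - y₁) ^ 2))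
    (h₁ : |y₁ - m * x₁ - q| ≤ Δ * Real.sqrt (1 + m ^ 2))
    (h₂ : |y₂ - m * x₂ - q| ≤ Δ * Real.sqrt (1 + m ^ 2)) :
    |Real.sin (Real.arctan ((y₂ - y₁) / (x₂ - x₁)) - Real.arctan m)| * D ≤ 2 * Δ ∧
      (D > 2 * Δ →
        |Real.sin (Real.arctan ((y₂ - y₁) / (x₂ - x₁)) - Real.arctan m)| ≤
          Real.sin (Real.arcsin (2 * Δ / D))) := by
  set dx := x₂ - x₁ with hdx
  set dy := y₂ - y₁ with hdy
  have hdxpos : 0 < dx := by simp [hdx]; linarith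
  set s := dy / dx with hs
  have hSpos : 0 < Real.sqrt (1 + s ^ 2) := Real.sqrt_pos.mpr (by positivity)
  have hMpos : 0 < Real.sqrt (1 + m ^ 2) := Real.sqrt_pos.mpr (by positivity)
  -- D = dx * √(1+s²)
  have hDval : D = dx * Real.sqrt (1 + s ^ 2) := by
    rw [hD, ← Real.sqrt_sq hdxpos.le, ← Real.sqrt_mul (sq_nonneg dx)]
    congr 1
    rw [Real.sq_sqrt (sq_nonneg dx), hs]
    field_simp
  have hsin : Real.sin (Real.arctan s - Real.arctan m)
      = (s - m) / (Real.sqrt (1 + s ^ 2) * Real.sqrt (1 + m ^ 2)) := by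
    rw [Real.sin_sub, Real.sin_arctan, Real.cos_arctan, Real.sin_arctan, Real.cos_arctan]
    field_simp
  have hsd : (s - m) * dx = dy - m * dx := by rw [hs]; field_simp
  have key : |Real.sin (Real.arctan s - Real.arctan m)| * D
      = |dy - m * dx| / Real.sqrt (1 + m ^ 2) := by
    rw [hsin, hDval, abs_div, abs_of_pos (mul_pos hSpos hMpos), div_mul_eq_mul_div,
      ← mul_assoc]
    have h1 : |s - m| * dx = |dy - m * dx| := by
      rw [← abs_of_pos hdxpos, ← abs_mul, abs_of_pos hdxpos, hsd]
    rw [h1, mul_comm (Real.sqrt (1 + s ^ 2)) (Real.sqrt (1 + m ^ 2)),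
      mul_div_mul_right _ _ hSpos.ne']
  have hbound : |dy - m * dx| ≤ 2 * Δ * Real.sqrt (1 + m ^ 2) := by
    have h2 : dy - m * dx = (y₂ - m * x₂ - q) - (y₁ - m * x₁ - q) := by
      simp only [hdy, hdx]; ring
    rw [h2]
    calc |(y₂ - m * x₂ - q) - (y₁ - m * x₁ - q)|
        ≤ |y₂ - m * x₂ - q| + |y₁ - m * x₁ - q| := abs_sub _ _
      _ ≤ Δ * Real.sqrt (1 + m ^ 2) + Δ * Real.sqrt (1 + m ^ 2) := add_le_add h₂ h₁
      _ = 2 * Δ * Real.sqrt (1 + m ^ 2) := by ring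
  have main : |Real.sin (Real.arctan s - Real.arctan m)| * D ≤ 2 * Δ := by
    rw [key, div_le_iff₀ hMpos]
    exact hbound
  refine ⟨main, fun hDgt => ?_⟩
  have hDpos : 0 < D := lt_of_le_of_lt (by linarith) hDgt
  have h01 : 0 ≤ 2 * Δ / D := by positivity
  rw [Real.sin_arcsin (by linarith) (by rw [div_le_one hDpos]; linarith)]
  rw [le_div_iff₀ hDpos]
  exact main
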